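/- With notation as above, for each i₀ ∈ {1,…,n-1} let B_T^{i₀} = {a(s)n(t) ∈ B° : ‖a(s)n(t)‖ < T, s_{i₀} ≤ C}. Then there is a constant c > 0 (depending on n and C) with ϱ(B_T^{i₀}) ≤ c · T^{n(n-1) - (n - i₀)} for all T > 1. -/

import Mathlib

open MeasureTheory Real Filter Set

noncomputable section

/-- Index set for the strictly-upper-triangular entries `t_{ij}`, `i < j`. -/
def UTidx (n : ℕ) := {p : Fin n × Fin n // p.1 < p.2}

instance (n : ℕ) : Fintype (UTidx n) := by unfold UTidx; infer_instance

/-- The full vector `s = (s₁,…,sₙ)` with `Σ sᵢ = 0`, parametrized by its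
first `n-1` coordinates. -/
def sfull (n : ℕ) (s : Fin (n - 1) → ℝ) : Fin n → ℝ := fun i =>
  if h : (i : ℕ) < n - 1 then s ⟨i, h⟩ else -(∑ j, s j)

/-- `N(s) = Σᵢ e^{2 sᵢ}`. -/
def Nfun (n : ℕ) (s : Fin (n - 1) → ℝ) : ℝ := ∑ i, Real.exp (2 * sfull n s i)

/-- `‖a(s) n(t)‖² = Σᵢ e^{2 sᵢ} + Σ_{i<j} e^{2 sᵢ} t_{ij}²` (Hilbert–Schmidt norm). -/
def normSq (n : ℕ) (s : Fin (n - 1) → ℝ) (t : UTidx n → ℝ) : ℝ :=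
  Nfun n s + ∑ p : UTidx n, Real.exp (2 * sfull n s p.val.1) * (t p) ^ 2

/-- `δ(s) = Σ_{k=1}^{n} (n-k) s_k`. -/
def deltafun (n : ℕ) (s : Fin (n - 1) → ℝ) : ℝ :=
  ∑ k : Fin n, ((n : ℝ) - ((k : ℕ) + 1)) * sfull n s k

/-- The coordinate region of `B_T° = {b ∈ B° : ‖b‖ < T}`. -/
def BTo (n : ℕ) (T : ℝ) : Set ((Fin (n - 1) → ℝ) × (UTidx n → ℝ)) :=
  {x | normSq n x.1 x.2 < T ^ 2}

/-- `ϱ(B_T°)`, the right Haar measure of `B_T°`, in the coordinates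
`dϱ(a(s)n(t)) = e^{2δ(s)} ds dt`. -/
def rhoO (n : ℕ) (T : ℝ) : ℝ := ∫ x in BTo n T, Real.exp (2 * deltafun n x.1)

end
/-! ### Auxiliary lemmas -/

noncomputable section BTCaux

/-- real coefficient `n - (i+1)` -/
def BTCc (n : ℕ) (i : Fin (n - 1)) : ℝ := (n : ℝ) - ((i : ℕ) + 1)

lemma BTCc_pos {n : ℕ} (i : Fin (n - 1)) : 0 < BTCc n i := by
  have h := i.2
  have h2 : (i : ℕ) + 1 < n := by omega
  have h3 : ((i : ℕ) + 1 : ℝ) < n := by exact_mod_cast h2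
  unfold BTCc; linarith

lemma BTC_sum_fin_pred {n : ℕ} (hn : 1 ≤ n) (g : Fin n → ℝ)
    (h0 : ∀ k : Fin n, (k : ℕ) = n - 1 → g k = 0) :
    ∑ k, g k = ∑ i : Fin (n - 1), g ⟨i.1, lt_of_lt_of_le i.2 (Nat.sub_le n 1)⟩ := by
  obtain ⟨m, rfl⟩ : ∃ m, n = m + 1 := ⟨n - 1, by omega⟩
  rw [Fin.sum_univ_castSucc]
  rw [h0 (Fin.last m) (by simp), add_zero]
  exact Finset.sum_congr rfl fun i _ => by congr 1

lemma BTC_sfull_eq {n : ℕ} (s : Fin (n - 1) → ℝ) (j : Fin n) (h : (j : ℕ) < n - 1) :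
    sfull n s j = s ⟨j, h⟩ := dif_pos h

lemma BTC_sfull_emb {n : ℕ} (s : Fin (n - 1) → ℝ) (i : Fin (n - 1)) :
    sfull n s ⟨i.1, lt_of_lt_of_le i.2 (Nat.sub_le n 1)⟩ = s i := by
  rw [show sfull n s ⟨i.1, lt_of_lt_of_le i.2 (Nat.sub_le n 1)⟩
      = s ⟨i.1, by simpa using i.2⟩ from dif_pos (by simpa using i.2)]

lemma BTC_deltafun_eq {n : ℕ} (hn : 1 ≤ n) (s : Fin (n - 1) → ℝ) :
    deltafun n s = ∑ i : Fin (n - 1), BTCc n i * s i := by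
  unfold deltafun
  rw [BTC_sum_fin_pred hn _ (fun k hk => ?_)]
  · refine Finset.sum_congr rfl fun i _ => ?_
    rw [BTC_sfull_eq s _ (by simpa using i.2)]
    simp [BTCc]
  · have h4 : ((k : ℕ) : ℝ) + 1 = (n : ℝ) := by
      rw [hk, Nat.cast_sub hn]; push_cast; ring
    rw [h4]; ring

lemma BTC_sumUT {n : ℕ} (f : Fin n → ℝ) :
    ∑ p : UTidx n, f p.1.1 = ∑ i : Fin n, ((n - 1 - (i : ℕ) : ℕ) : ℝ) * f i := by
  classical
  have h1 : ∑ p : {q : Fin n × Fin n // q.1 < q.2}, f p.1.1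
      = ∑ q ∈ Finset.univ.filter (fun q : Fin n × Fin n => q.1 < q.2), f q.1 :=
    (Finset.sum_subtype (p := fun q : Fin n × Fin n => q.1 < q.2)
      (Finset.univ.filter (fun q : Fin n × Fin n => q.1 < q.2))
      (fun x => by simp) (fun q => f q.1)).symm
  have h0 : ∑ p : UTidx n, f p.1.1
      = ∑ p : {q : Fin n × Fin n // q.1 < q.2}, f p.1.1 := rfl
  rw [h0, h1, Finset.sum_filter, Fintype.sum_prod_type]
  refine Finset.sum_congr rfl fun i _ => ?_
  have hb : ∀ b : Fin n, (if (i, b).1 < (i, b).2 then f (i, b).1 else 0)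
      = if i < b then f i else 0 := fun b => rfl
  simp only [hb]
  rw [← Finset.sum_filter, Finset.sum_const, Finset.filter_lt_eq_Ioi, Fin.card_Ioi,
    nsmul_eq_mul]

/-- key identity: `∑_{p : UTidx n} sfull s p.1 = δ(s)` -/
lemma BTC_sum_sfull_UT {n : ℕ} (hn : 1 ≤ n) (s : Fin (n - 1) → ℝ) :
    ∑ p : UTidx n, sfull n s p.1.1 = deltafun n s := by
  rw [BTC_sumUT]
  unfold deltafun
  refine Finset.sum_congr rfl fun k _ => ?_
  by_cases hk : (k : ℕ) = n - 1
  · have h1 : ((n - 1 - (k : ℕ) : ℕ) : ℝ) = 0 := by rw [hk]; simp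
    have h2 : (n : ℝ) - ((k : ℕ) + 1) = 0 := by
      rw [hk, Nat.cast_sub hn]; push_cast; ring
    rw [h1, h2]
  · congr 1
    have hlt : (k : ℕ) < n - 1 := by have := k.2; omega
    rw [Nat.cast_sub (by omega), Nat.cast_sub hn]
    push_cast; ring

/-- cardinality identity -/
lemma BTC_card_UT {n : ℕ} (hn : 1 ≤ n) :
    ((Fintype.card (UTidx n) : ℝ)) = ∑ i : Fin (n - 1), BTCc n i := by
  have h := BTC_sumUT (n := n) (fun _ => (1 : ℝ))
  simp only [mul_one] at h
  rw [Fintype.card_eq_sum_ones, Nat.cast_sum]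
  simp only [Nat.cast_one] at h ⊢
  rw [h]
  rw [BTC_sum_fin_pred hn _ (fun k hk => by rw [hk]; simp)]
  refine Finset.sum_congr rfl fun i _ => ?_
  have hlt : (i : ℕ) < n - 1 := i.2
  rw [Nat.cast_sub (by omega), Nat.cast_sub hn]
  unfold BTCc; push_cast; ring

lemma BTC_gauss (N : ℕ) : ∑ i ∈ Finset.range N, (i : ℝ) = N * (N - 1) / 2 := by
  induction N with
  | zero => simp
  | succ k ih => rw [Finset.sum_range_succ, ih]; push_cast; ring

lemma BTC_two_sum {n : ℕ} (hn : 1 ≤ n) :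
    ((n * (n - 1) : ℕ) : ℝ) = 2 * ∑ i : Fin (n - 1), BTCc n i := by
  rw [show (∑ i : Fin (n - 1), BTCc n i)
      = ∑ i ∈ Finset.range (n - 1), ((n : ℝ) - ((i : ℕ) + 1)) from
    Fin.sum_univ_eq_sum_range (fun k => (n : ℝ) - ((k : ℕ) + 1)) (n - 1)]
  rw [Finset.sum_sub_distrib, Finset.sum_const, Finset.card_range, nsmul_eq_mul]
  have h1 : ∑ i ∈ Finset.range (n - 1), ((i : ℝ) + 1)
      = ((n - 1 : ℕ) : ℝ) * (((n - 1 : ℕ) : ℝ) - 1) / 2 + ((n - 1 : ℕ) : ℝ) := by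
    rw [Finset.sum_add_distrib, BTC_gauss, Finset.sum_const, Finset.card_range]; simp
  rw [h1]
  have h2 : ((n - 1 : ℕ) : ℝ) = (n : ℝ) - 1 := by rw [Nat.cast_sub hn]; simp
  have h3 : ((n * (n - 1) : ℕ) : ℝ) = (n : ℝ) * ((n : ℝ) - 1) := by
    push_cast [Nat.cast_sub hn]; ring
  rw [h2, h3]
  ring

lemma BTC_exp_indicator (c b : ℝ) (hc : 0 < c) :
    (Set.Iic b).indicator (fun x => Real.exp (c * x))
      = fun x => (Set.Iic (c * b)).indicator Real.exp (c * x) := by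
  ext x
  by_cases h : x ≤ b
  · rw [Set.indicator_of_mem (Set.mem_Iic.2 h),
      Set.indicator_of_mem (Set.mem_Iic.2 (by nlinarith))]
  · rw [Set.indicator_of_notMem (by simpa using h),
      Set.indicator_of_notMem (fun hx => h (le_of_mul_le_mul_left (Set.mem_Iic.1 hx) hc))]

lemma BTC_integrable_exp_Iic (c b : ℝ) (hc : 0 < c) :
    MeasureTheory.Integrable ((Set.Iic b).indicator (fun x => Real.exp (c * x))) := by
  rw [BTC_exp_indicator c b hc]
  exact ((integrable_indicator_iff measurableSet_Iic).2
    ((integrableOn_exp_Iic (c * b)))).comp_mul_left' hc.ne'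

lemma BTC_integral_exp_Iic (c b : ℝ) (hc : 0 < c) :
    ∫ x, (Set.Iic b).indicator (fun x => Real.exp (c * x)) x = Real.exp (c * b) / c := by
  rw [BTC_exp_indicator c b hc,
    MeasureTheory.Measure.integral_comp_mul_left
      (fun y => (Set.Iic (c * b)).indicator Real.exp y) c,
    MeasureTheory.integral_indicator measurableSet_Iic, integral_exp_Iic,
    abs_of_pos (inv_pos.2 hc), smul_eq_mul]
  ring

lemma BTC_cont_sfull (n : ℕ) (i : Fin n) :
    Continuous fun s : Fin (n - 1) → ℝ => sfull n s i := by
  unfold sfull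
  by_cases h : (i : ℕ) < n - 1
  · simp only [dif_pos h]; exact continuous_apply _
  · simp only [dif_neg h]
    exact (continuous_finset_sum _ fun j _ => continuous_apply j).neg

lemma BTC_cont_deltafun (n : ℕ) : Continuous (deltafun n) := by
  unfold deltafun
  exact continuous_finset_sum _ fun k _ => continuous_const.mul (BTC_cont_sfull n k)

lemma BTC_cont_normSq (n : ℕ) :
    Continuous fun x : (Fin (n - 1) → ℝ) × (UTidx n → ℝ) => normSq n x.1 x.2 := by
  unfold normSq Nfun
  apply Continuous.add
  · exact continuous_finset_sum _ fun i _ =>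
      Real.continuous_exp.comp ((continuous_const.mul (BTC_cont_sfull n i)).comp continuous_fst)
  · exact continuous_finset_sum _ fun p _ =>
      (Real.continuous_exp.comp
        ((continuous_const.mul (BTC_cont_sfull n p.1.1)).comp continuous_fst)).mul
      (((continuous_apply p).comp continuous_snd).pow 2)

end BTCaux

set_option maxHeartbeats 2000000 in
/-- For `i₀ ∈ {1,…,n-1}` (here `i₀ : Fin (n-1)`, zero-based, so the
paper's `i₀` is `(i₀ : ℕ) + 1`), with `B_T^{i₀} = {a(s)n(t) ∈ B° : ‖a(s)n(t)‖ < T, s_{i₀} ≤ C}`,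
there is `c > 0` with `ϱ(B_T^{i₀}) ≤ c T^{n(n-1) - (n - i₀)}` for all `T > 1`. -/
theorem lattice_action_lem_BTC2_slice (n : ℕ) (hn : 2 ≤ n) (C : ℝ) (i₀ : Fin (n - 1)) :
    ∃ c : ℝ, 0 < c ∧ ∀ T : ℝ, 1 < T →
      (∫ x in {x : (Fin (n - 1) → ℝ) × (UTidx n → ℝ) |
          normSq n x.1 x.2 < T ^ 2 ∧ x.1 i₀ ≤ C},
        Real.exp (2 * deltafun n x.1)) ≤
      c * T ^ (((n * (n - 1) : ℕ) : ℝ) - ((n : ℝ) - ((i₀ : ℕ) + 1))) := by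
  classical
  have hn1 : 1 ≤ n := by omega
  set d : ℕ := Fintype.card (UTidx n) with hd
  have hc0 : 0 < BTCc n i₀ := BTCc_pos i₀
  have hprodpos : 0 < ∏ i : Fin (n - 1), (BTCc n i)⁻¹ :=
    Finset.prod_pos fun i _ => inv_pos.2 (BTCc_pos i)
  refine ⟨2 ^ d * Real.exp (BTCc n i₀ * C) * ∏ i : Fin (n - 1), (BTCc n i)⁻¹,
    mul_pos (mul_pos (pow_pos two_pos d) (Real.exp_pos _)) hprodpos, ?_⟩
  intro T hT
  have hT0 : (0 : ℝ) < T := lt_trans one_pos hT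
  set L : ℝ := Real.log T with hLdef
  have hL : 0 < L := Real.log_pos hT
  have hexpL : Real.exp L = T := Real.exp_log hT0
  set b : Fin (n - 1) → ℝ := fun i => if i = i₀ then min C L else L with hbdef
  set h : Fin (n - 1) → ℝ → ℝ :=
    fun i x => (Set.Iic (b i)).indicator (fun y => Real.exp (BTCc n i * y)) x with hhdef
  have hbi0 : b i₀ = min C L := by simp [hbdef]
  have hbne : ∀ i : Fin (n - 1), i ≠ i₀ → b i = L := fun i hi => by simp [hbdef, hi]
  have hFinNe : Nonempty (Fin n) := ⟨⟨0, by omega⟩⟩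
  set S : Set ((Fin (n - 1) → ℝ) × (UTidx n → ℝ)) :=
    {x | normSq n x.1 x.2 < T ^ 2 ∧ x.1 i₀ ≤ C} with hSdef
  have hSm : MeasurableSet S := by
    have : S = {x : (Fin (n - 1) → ℝ) × (UTidx n → ℝ) | normSq n x.1 x.2 < T ^ 2}
        ∩ {x : (Fin (n - 1) → ℝ) × (UTidx n → ℝ) | x.1 i₀ ≤ C} := rfl
    rw [this]
    exact (measurableSet_lt (BTC_cont_normSq n).measurable measurable_const).inter
      (measurableSet_le (((continuous_apply i₀).comp continuous_fst).measurable)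
        measurable_const)
  have hGc : Continuous fun x : (Fin (n - 1) → ℝ) × (UTidx n → ℝ) =>
      Real.exp (2 * deltafun n x.1) :=
    Real.continuous_exp.comp ((continuous_const.mul (BTC_cont_deltafun n)).comp continuous_fst)
  set G : (Fin (n - 1) → ℝ) × (UTidx n → ℝ) → ENNReal :=
    fun x => ENNReal.ofReal (Real.exp (2 * deltafun n x.1)) with hGdef
  have hGm : Measurable G := hGc.measurable.ennreal_ofReal
  -- measurability of the one-variable pieces
  have hhm : ∀ i, Measurable (h i) := fun i =>
    (Real.continuous_exp.comp (continuous_const.mul continuous_id)).measurable.indicator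
      measurableSet_Iic
  have hprodm : Measurable fun s₀ : Fin (n - 1) → ℝ =>
      ENNReal.ofReal (∏ i, h i (s₀ i)) := by
    apply Measurable.ennreal_ofReal
    exact Finset.measurable_prod _ fun i _ => (hhm i).comp (measurable_pi_apply i)
  -- the pointwise inner bound
  have inner : ∀ s₀ : Fin (n - 1) → ℝ,
      (∫⁻ t, S.indicator G (s₀, t)) ≤ ENNReal.ofReal ((2 * T) ^ d * ∏ i, h i (s₀ i)) := by
    intro s₀
    have hslm : MeasurableSet {t : UTidx n → ℝ | (s₀, t) ∈ S} :=
      hSm.preimage measurable_prodMk_left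
    have h1 : ∀ t : UTidx n → ℝ, S.indicator G (s₀, t)
        = ({t : UTidx n → ℝ | (s₀, t) ∈ S}).indicator
            (fun _ => ENNReal.ofReal (Real.exp (2 * deltafun n s₀))) t := by
      intro t
      by_cases ht : (s₀, t) ∈ S
      · rw [Set.indicator_of_mem (show t ∈ {t : UTidx n → ℝ | (s₀, t) ∈ S} from ht)]
        exact Set.indicator_of_mem ht G
      · rw [Set.indicator_of_notMem (show t ∉ {t : UTidx n → ℝ | (s₀, t) ∈ S} from ht)]
        exact Set.indicator_of_notMem ht G
    rw [MeasureTheory.lintegral_congr h1, MeasureTheory.lintegral_indicator hslm,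
      MeasureTheory.setLIntegral_const]
    by_cases hne : {t : UTidx n → ℝ | (s₀, t) ∈ S}.Nonempty
    case neg =>
      rw [Set.not_nonempty_iff_eq_empty.1 hne]
      simp
    obtain ⟨t₀, hnorm, hC⟩ := hne
    have hNpos : 0 < Nfun n s₀ :=
      Finset.sum_pos (fun j _ => Real.exp_pos _) Finset.univ_nonempty
    have htail : 0 ≤ ∑ p : UTidx n, Real.exp (2 * sfull n s₀ p.1.1) * (t₀ p) ^ 2 :=
      Finset.sum_nonneg fun p _ => mul_nonneg (Real.exp_pos _).le (sq_nonneg _)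
    have hcoord : ∀ i : Fin (n - 1), s₀ i ≤ b i := by
      intro i
      have hmem : Real.exp (2 * s₀ i) ≤ Nfun n s₀ := by
        have h5 := Finset.single_le_sum (f := fun j : Fin n => Real.exp (2 * sfull n s₀ j))
          (fun j _ => (Real.exp_pos _).le)
          (Finset.mem_univ (⟨i.1, lt_of_lt_of_le i.2 (Nat.sub_le n 1)⟩ : Fin n))
        rwa [BTC_sfull_emb] at h5
      have h6 : Real.exp (2 * s₀ i) < T ^ 2 := by
        have hNle : Nfun n s₀ ≤ normSq n s₀ t₀ := by unfold normSq; linarith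
        calc Real.exp (2 * s₀ i) ≤ Nfun n s₀ := hmem
          _ ≤ normSq n s₀ t₀ := hNle
          _ < T ^ 2 := hnorm
      have h7 : T ^ 2 = Real.exp (2 * L) := by
        rw [two_mul, Real.exp_add, hexpL]; ring
      have h8 : s₀ i < L := by
        rw [h7] at h6
        have := Real.exp_lt_exp.1 h6
        linarith
      by_cases hii : i = i₀
      · subst hii; rw [hbi0]; exact le_min hC h8.le
      · rw [hbne i hii]; exact h8.le
    have hsub : {t : UTidx n → ℝ | (s₀, t) ∈ S} ⊆
        Set.univ.pi fun p : UTidx n =>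
          Set.Ioo (-(T * Real.exp (-(sfull n s₀ p.1.1)))) (T * Real.exp (-(sfull n s₀ p.1.1))) := by
      intro t ht p _
      obtain ⟨hnorm', -⟩ := ht
      have hterm : Real.exp (2 * sfull n s₀ p.1.1) * (t p) ^ 2
          ≤ ∑ q : UTidx n, Real.exp (2 * sfull n s₀ q.1.1) * (t q) ^ 2 :=
        Finset.single_le_sum
          (f := fun q : UTidx n => Real.exp (2 * sfull n s₀ q.1.1) * (t q) ^ 2)
          (fun q _ => mul_nonneg (Real.exp_pos _).le (sq_nonneg _))
          (Finset.mem_univ p)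
      have h8 : Real.exp (2 * sfull n s₀ p.1.1) * (t p) ^ 2 < T ^ 2 := by
        unfold normSq at hnorm'
        linarith
      have hsq : Real.exp (sfull n s₀ p.1.1) ^ 2 = Real.exp (2 * sfull n s₀ p.1.1) := by
        rw [two_mul, Real.exp_add, pow_two]
      have h9 : (Real.exp (sfull n s₀ p.1.1) * |t p|) ^ 2 < T ^ 2 := by
        rw [mul_pow, hsq, sq_abs]; exact h8
      have h10 : Real.exp (sfull n s₀ p.1.1) * |t p| < T :=
        lt_of_pow_lt_pow_left₀ 2 hT0.le h9
      have h11 : |t p| < T * Real.exp (-(sfull n s₀ p.1.1)) := by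
        rw [Real.exp_neg, ← div_eq_mul_inv, lt_div_iff₀ (Real.exp_pos _)]
        linarith
      exact abs_lt.1 h11
    have hvol : (volume : Measure (UTidx n → ℝ)) {t | (s₀, t) ∈ S}
        ≤ ∏ p : UTidx n, ENNReal.ofReal (2 * (T * Real.exp (-(sfull n s₀ p.1.1)))) := by
      refine le_trans (measure_mono hsub) (le_of_eq ?_)
      rw [volume_pi_pi]
      exact Finset.prod_congr rfl fun p _ => by rw [Real.volume_Ioo]; congr 1; ring
    calc ENNReal.ofReal (Real.exp (2 * deltafun n s₀)) * volume {t : UTidx n → ℝ | (s₀, t) ∈ S}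
        ≤ ENNReal.ofReal (Real.exp (2 * deltafun n s₀)) *
          ∏ p : UTidx n, ENNReal.ofReal (2 * (T * Real.exp (-(sfull n s₀ p.1.1)))) :=
          mul_le_mul_right hvol _
      _ = ENNReal.ofReal (Real.exp (2 * deltafun n s₀) *
          ∏ p : UTidx n, (2 * (T * Real.exp (-(sfull n s₀ p.1.1))))) := by
          rw [ENNReal.ofReal_mul (Real.exp_pos _).le,
            ENNReal.ofReal_prod_of_nonneg (fun p _ => by positivity)]
      _ = ENNReal.ofReal ((2 * T) ^ d * ∏ i, h i (s₀ i)) := by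
          congr 1
          have e1 : ∏ p : UTidx n, (2 * (T * Real.exp (-(sfull n s₀ p.1.1))))
              = (2 * T) ^ d * Real.exp (-(deltafun n s₀)) := by
            have hre : ∀ p : UTidx n, 2 * (T * Real.exp (-(sfull n s₀ p.1.1)))
                = (2 * T) * Real.exp (-(sfull n s₀ p.1.1)) := fun p => by ring
            rw [Finset.prod_congr rfl fun p _ => hre p, Finset.prod_mul_distrib,
              Finset.prod_const, ← Real.exp_sum, Finset.sum_neg_distrib,
              BTC_sum_sfull_UT hn1 s₀, Finset.card_univ]
          have e2 : ∏ i, h i (s₀ i) = Real.exp (deltafun n s₀) := by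
            have hhe : ∀ i : Fin (n - 1), h i (s₀ i) = Real.exp (BTCc n i * s₀ i) := fun i =>
              Set.indicator_of_mem (Set.mem_Iic.2 (hcoord i)) _
            rw [Finset.prod_congr rfl fun i _ => hhe i, ← Real.exp_sum,
              ← BTC_deltafun_eq hn1]
          have e3 : Real.exp (2 * deltafun n s₀) * Real.exp (-(deltafun n s₀))
              = Real.exp (deltafun n s₀) := by
            rw [← Real.exp_add]; congr 1; ring
          rw [e1, e2]
          calc Real.exp (2 * deltafun n s₀) * ((2 * T) ^ d * Real.exp (-(deltafun n s₀)))
              = (2 * T) ^ d * (Real.exp (2 * deltafun n s₀) * Real.exp (-(deltafun n s₀))) := by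
                ring
            _ = (2 * T) ^ d * Real.exp (deltafun n s₀) := by rw [e3]
  -- rewrite the integral as a lintegral
  rw [MeasureTheory.integral_eq_lintegral_of_nonneg_ae
      (Filter.Eventually.of_forall fun x => (Real.exp_pos _).le)
      hGc.aestronglyMeasurable]
  have hRHS0 : (0 : ℝ) ≤ 2 ^ d * Real.exp (BTCc n i₀ * C) * (∏ i : Fin (n - 1), (BTCc n i)⁻¹)
      * T ^ (((n * (n - 1) : ℕ) : ℝ) - ((n : ℝ) - ((i₀ : ℕ) + 1))) :=
    le_of_lt (mul_pos (mul_pos (mul_pos (pow_pos two_pos d) (Real.exp_pos _)) hprodpos)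
      (Real.rpow_pos_of_pos hT0 _))
  apply ENNReal.toReal_le_of_le_ofReal hRHS0
  have hIone : ∀ i : Fin (n - 1), ∫ x, h i x = Real.exp (BTCc n i * b i) / BTCc n i :=
    fun i => BTC_integral_exp_Iic (BTCc n i) (b i) (BTCc_pos i)
  have hIint : MeasureTheory.Integrable fun s₀ : Fin (n - 1) → ℝ => ∏ i, h i (s₀ i) :=
    MeasureTheory.Integrable.fintype_prod fun i => BTC_integrable_exp_Iic _ _ (BTCc_pos i)
  calc ∫⁻ a in S, ENNReal.ofReal (Real.exp (2 * deltafun n a.1))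
      = ∫⁻ a, S.indicator G a := (MeasureTheory.lintegral_indicator hSm G).symm
    _ = ∫⁻ s₀ : Fin (n - 1) → ℝ, ∫⁻ t : UTidx n → ℝ, S.indicator G (s₀, t) := by
        rw [MeasureTheory.Measure.volume_eq_prod, MeasureTheory.lintegral_prod _
          (hGm.indicator hSm).aemeasurable]
    _ ≤ ∫⁻ s₀ : Fin (n - 1) → ℝ, ENNReal.ofReal ((2 * T) ^ d * ∏ i, h i (s₀ i)) :=
        MeasureTheory.lintegral_mono inner
    _ = ENNReal.ofReal ((2 * T) ^ d) *
        ∫⁻ s₀ : Fin (n - 1) → ℝ, ENNReal.ofReal (∏ i, h i (s₀ i)) := by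
        rw [← MeasureTheory.lintegral_const_mul _ hprodm]
        refine MeasureTheory.lintegral_congr fun s₀ => ?_
        rw [ENNReal.ofReal_mul (by positivity)]
    _ = ENNReal.ofReal ((2 * T) ^ d) *
        ENNReal.ofReal (∫ s₀ : Fin (n - 1) → ℝ, ∏ i, h i (s₀ i)) := by
        rw [MeasureTheory.ofReal_integral_eq_lintegral_ofReal hIint
          (Filter.Eventually.of_forall fun s₀ => Finset.prod_nonneg fun i _ =>
            Set.indicator_nonneg (fun y _ => (Real.exp_pos _).le) _)]
    _ = ENNReal.ofReal ((2 * T) ^ d) *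
        ENNReal.ofReal (∏ i, Real.exp (BTCc n i * b i) / BTCc n i) := by
        rw [MeasureTheory.integral_fintype_prod_volume_eq_prod (f := h)]
        simp_rw [hIone]
    _ ≤ ENNReal.ofReal (2 ^ d * Real.exp (BTCc n i₀ * C) * (∏ i : Fin (n - 1), (BTCc n i)⁻¹)
        * T ^ (((n * (n - 1) : ℕ) : ℝ) - ((n : ℝ) - ((i₀ : ℕ) + 1)))) := by
        rw [← ENNReal.ofReal_mul (by positivity)]
        apply ENNReal.ofReal_le_ofReal
        have hsum : ∑ i : Fin (n - 1), BTCc n i * b i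
            ≤ BTCc n i₀ * C + ((∑ i : Fin (n - 1), BTCc n i) - BTCc n i₀) * L := by
          rw [← Finset.add_sum_erase _ (fun i => BTCc n i * b i) (Finset.mem_univ i₀)]
          have h2 : ∑ i ∈ Finset.univ.erase i₀, BTCc n i * b i
              = ((∑ i : Fin (n - 1), BTCc n i) - BTCc n i₀) * L := by
            rw [show (∑ i ∈ Finset.univ.erase i₀, BTCc n i * b i)
                = ∑ i ∈ Finset.univ.erase i₀, BTCc n i * L from
              Finset.sum_congr rfl fun i hi => by rw [hbne i (Finset.mem_erase.1 hi).1]]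
            rw [← Finset.sum_mul, Finset.sum_erase_eq_sub (Finset.mem_univ i₀)]
          have h3 : BTCc n i₀ * b i₀ ≤ BTCc n i₀ * C := by
            rw [hbi0]
            exact mul_le_mul_of_nonneg_left (min_le_left _ _) hc0.le
          rw [h2]
          linarith
        have hprod : ∏ i, (Real.exp (BTCc n i * b i) / BTCc n i)
            = Real.exp (∑ i, BTCc n i * b i) * ∏ i : Fin (n - 1), (BTCc n i)⁻¹ := by
          rw [Finset.prod_div_distrib, ← Real.exp_sum, div_eq_mul_inv,
            Finset.prod_inv_distrib]
        have hexp2 : Real.exp (∑ i, BTCc n i * b i)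
            ≤ Real.exp (BTCc n i₀ * C) *
              T ^ ((∑ i : Fin (n - 1), BTCc n i) - BTCc n i₀) := by
          rw [Real.rpow_def_of_pos hT0, ← hLdef, ← Real.exp_add]
          exact Real.exp_le_exp.2 (by nlinarith [hsum])
        calc (2 * T) ^ d * ∏ i, (Real.exp (BTCc n i * b i) / BTCc n i)
            = 2 ^ d * T ^ d * (Real.exp (∑ i, BTCc n i * b i) *
              ∏ i : Fin (n - 1), (BTCc n i)⁻¹) := by
              rw [mul_pow, hprod]
          _ ≤ 2 ^ d * T ^ d * ((Real.exp (BTCc n i₀ * C) *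
              T ^ ((∑ i : Fin (n - 1), BTCc n i) - BTCc n i₀)) *
              ∏ i : Fin (n - 1), (BTCc n i)⁻¹) := by
              exact mul_le_mul_of_nonneg_left
                (mul_le_mul_of_nonneg_right hexp2 hprodpos.le) (by positivity)
          _ = (2 ^ d * Real.exp (BTCc n i₀ * C) * ∏ i : Fin (n - 1), (BTCc n i)⁻¹) *
              (T ^ (d : ℝ) * T ^ ((∑ i : Fin (n - 1), BTCc n i) - BTCc n i₀)) := by
              rw [Real.rpow_natCast]; ring
          _ = (2 ^ d * Real.exp (BTCc n i₀ * C) * ∏ i : Fin (n - 1), (BTCc n i)⁻¹) *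
              T ^ (((n * (n - 1) : ℕ) : ℝ) - ((n : ℝ) - ((i₀ : ℕ) + 1))) := by
              rw [← Real.rpow_add hT0]
              have hds : (d : ℝ) = ∑ i : Fin (n - 1), BTCc n i := by
                rw [hd]; exact BTC_card_UT hn1
              have h2s := BTC_two_sum (n := n) hn1
              have hc0e : BTCc n i₀ = (n : ℝ) - ((i₀ : ℕ) + 1) := rfl
              rw [← hc0e]
              have hexpo : (d : ℝ) + ((∑ i : Fin (n - 1), BTCc n i) - BTCc n i₀)
                  = ((n * (n - 1) : ℕ) : ℝ) - BTCc n i₀ := by linarith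
              rw [hexpo]
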